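/- If a configuration c of a connected graph G admits a finite sequence of legal vertex firings in which every vertex of G fires at least once, then c is volatile (i.e., admits an infinite legal firing sequence). -/

import Mathlib

variable {V : Type*} [Fintype V] [DecidableEq V]

/-- Firing vertex `v`: remove `deg v` chips from `v`, add one chip to each neighbour. -/
def fire (G : SimpleGraph V) [DecidableRel G.Adj] (c : V → ℕ) (v : V) : V → ℕ :=
  fun u => if u = v then c v - G.degree v else c u + (if G.Adj v u then 1 else 0)

/-- Configuration after firing `f 0, f 1, …, f (m-1)` in order. -/
def fireIter (G : SimpleGraph V) [DecidableRel G.Adj] (c : V → ℕ) (f : ℕ → V) : ℕ → V → ℕ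
  | 0 => c
  | m + 1 => fire G (fireIter G c f m) (f m)

/-- A configuration is volatile if it admits an infinite legal firing sequence. -/
def Volatile (G : SimpleGraph V) [DecidableRel G.Adj] (c : V → ℕ) : Prop :=
  ∃ f : ℕ → V, ∀ m : ℕ, G.degree (f m) ≤ fireIter G c f m (f m)

/-- Configuration after firing a finite list of vertices in order. -/
def fireList (G : SimpleGraph V) [DecidableRel G.Adj] : (V → ℕ) → List V → (V → ℕ)
  | c, [] => c
  | c, v :: l => fireList G (fire G c v) l

/-- A finite firing list is legal if each vertex has at least its degree in chips when fired. -/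
def LegalList (G : SimpleGraph V) [DecidableRel G.Adj] : (V → ℕ) → List V → Prop
  | _, [] => True
  | c, v :: l => G.degree v ≤ c v ∧ LegalList G (fire G c v) l

lemma fireList_append (G : SimpleGraph V) [DecidableRel G.Adj] :
    ∀ (l₁ l₂ : List V) (c : V → ℕ),
      fireList G c (l₁ ++ l₂) = fireList G (fireList G c l₁) l₂ := by
  intro l₁
  induction l₁ with
  | nil => intro l₂ c; rfl
  | cons a t ih => intro l₂ c; simpa [fireList] using ih l₂ (fire G c a)

lemma LegalList_append (G : SimpleGraph V) [DecidableRel G.Adj] :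
    ∀ (l₁ l₂ : List V) (c : V → ℕ),
      LegalList G c (l₁ ++ l₂) ↔ LegalList G c l₁ ∧ LegalList G (fireList G c l₁) l₂ := by
  intro l₁
  induction l₁ with
  | nil => intro l₂ c; simp [LegalList, fireList]
  | cons a t ih =>
      intro l₂ c
      constructor
      · rintro ⟨ha, hrest⟩
        obtain ⟨h1, h2⟩ := (ih l₂ (fire G c a)).mp hrest
        exact ⟨⟨ha, h1⟩, h2⟩
      · rintro ⟨⟨ha, ht⟩, h₂⟩
        exact ⟨ha, (ih l₂ (fire G c a)).mpr ⟨ht, h₂⟩⟩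

lemma fireList_count (G : SimpleGraph V) [DecidableRel G.Adj] :
    ∀ (l : List V) (c : V → ℕ), LegalList G c l → ∀ u : V,
      fireList G c l u + G.degree u * l.count u
        = c u + (l.map fun w => if G.Adj w u then 1 else 0).sum := by
  intro l
  induction l with
  | nil => intro c _ u; simp [fireList]
  | cons a t ih =>
      intro c hleg u
      obtain ⟨h1, h2⟩ := hleg
      have key := ih (fire G c a) h2 u
      have hcnt : (a :: t).count u = t.count u + (if u = a then 1 else 0) := by
        rcases eq_or_ne u a with rfl | h
        · simp [List.count_cons]
        · simp [List.count_cons, h, Ne.symm h]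
      have hfire : fire G c a u + G.degree u * (if u = a then 1 else 0)
          = c u + (if G.Adj a u then 1 else 0) := by
        rcases eq_or_ne u a with rfl | h
        · simp [fire, Nat.sub_add_cancel h1, G.irrefl]
        · simp [fire, h]
      calc fireList G c (a :: t) u + G.degree u * (a :: t).count u
          = (fireList G (fire G c a) t u + G.degree u * t.count u)
              + G.degree u * (if u = a then 1 else 0) := by
            simp only [fireList, hcnt, Nat.mul_add]; ring
        _ = (fire G c a u + (t.map fun w => if G.Adj w u then 1 else 0).sum)
              + G.degree u * (if u = a then 1 else 0) := by rw [key]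
        _ = (fire G c a u + G.degree u * (if u = a then 1 else 0))
              + (t.map fun w => if G.Adj w u then 1 else 0).sum := by ring
        _ = c u + ((a :: t).map fun w => if G.Adj w u then 1 else 0).sum := by
            rw [hfire]; simp only [List.map_cons, List.sum_cons]; ring

lemma deg_le_sum (G : SimpleGraph V) [DecidableRel G.Adj] (v : V) (s : List V)
    (hs : ∀ u, G.Adj v u → u ∈ s) :
    G.degree v ≤ (s.map fun w => if G.Adj w v then 1 else 0).sum := by
  rw [Finset.sum_list_map_count]
  have hdeg : G.degree v = ∑ _u ∈ G.neighborFinset v, 1 := by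
    rw [SimpleGraph.degree]; exact Finset.card_eq_sum_ones _
  rw [hdeg]
  refine le_trans (Finset.sum_le_sum ?_) (Finset.sum_le_sum_of_subset ?_)
  · intro u hu
    rw [SimpleGraph.mem_neighborFinset] at hu
    have h1 : G.Adj u v := hu.symm
    have h2 : 1 ≤ s.count u := List.count_pos_iff.mpr (hs u hu)
    simpa [h1, smul_eq_mul] using h2
  · intro u hu
    rw [SimpleGraph.mem_neighborFinset] at hu
    exact List.mem_toFinset.mpr (hs u hu)

lemma exists_split [Nonempty V] : ∀ (l : List V), (∀ v : V, v ∈ l) →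
    ∃ (l₁ : List V) (v : V) (s : List V),
      l = l₁ ++ v :: s ∧ v ∉ s ∧ ∀ u : V, u ≠ v → u ∈ s := by
  intro l
  induction l with
  | nil => intro h; exact absurd (h (Classical.arbitrary V)) List.not_mem_nil
  | cons a t ih =>
      intro h
      by_cases ht : ∀ v : V, v ∈ t
      · obtain ⟨l₁, v, s, rfl, hv, hs⟩ := ih ht
        exact ⟨a :: l₁, v, s, rfl, hv, hs⟩
      · push_neg at ht
        obtain ⟨w, hw⟩ := ht
        have hwa : w = a := by have := h w; simp at this; tauto
        subst hwa
        refine ⟨[], w, t, rfl, hw, fun u hu => ?_⟩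
        have := h u; simp at this; tauto

lemma exists_fire [Nonempty V] (G : SimpleGraph V) [DecidableRel G.Adj]
    (c : V → ℕ) (l : List V) (hleg : LegalList G c l) (hall : ∀ v : V, v ∈ l) :
    ∃ v : V, G.degree v ≤ fireList G c l v := by
  obtain ⟨l₁, v, s, rfl, hvs, hs⟩ := exists_split l hall
  rw [LegalList_append] at hleg
  obtain ⟨h1, h2, h3⟩ := hleg
  refine ⟨v, ?_⟩
  rw [fireList_append]
  have key := fireList_count G s (fire G (fireList G c l₁) v) h3 v
  rw [List.count_eq_zero_of_not_mem hvs, Nat.mul_zero, Nat.add_zero] at key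
  have hstep : fireList G (fireList G c l₁) (v :: s)
      = fireList G (fire G (fireList G c l₁) v) s := rfl
  rw [hstep, key]
  have hnb : ∀ u, G.Adj v u → u ∈ s := fun u hu => hs u (G.ne_of_adj hu).symm
  exact le_trans (deg_le_sum G v s hnb) (Nat.le_add_left _ _)

def chain (l : List V) (g : List V → V) : ℕ → List V
  | 0 => l
  | n + 1 => chain l g n ++ [g (chain l g n)]

lemma chain_prefix (l : List V) (g : List V → V) {m n : ℕ} (h : m ≤ n) :
    chain l g m <+: chain l g n := by
  induction n, h using Nat.le_induction with
  | base => exact List.prefix_rfl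
  | succ n hmn ih => exact ih.trans ⟨[g (chain l g n)], rfl⟩

lemma chain_length (l : List V) (g : List V → V) :
    ∀ n, (chain l g n).length = l.length + n
  | 0 => rfl
  | n + 1 => by simp [chain, chain_length l g n]; omega

/-- If a configuration of a connected graph admits a finite legal firing
sequence in which every vertex fires at least once, then it is volatile. -/
theorem stmt0 (G : SimpleGraph V) [DecidableRel G.Adj] (hconn : G.Connected)
    (c : V → ℕ) (l : List V) (hleg : LegalList G c l) (hall : ∀ v : V, v ∈ l) :
    Volatile G c := by
  classical
  have hne : Nonempty V := hconn.nonempty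
  let g : List V → V := fun p =>
    if h : LegalList G c p ∧ ∀ v : V, v ∈ p then Classical.choose (exists_fire G c p h.1 h.2)
    else Classical.arbitrary V
  have hP : ∀ n, LegalList G c (chain l g n) ∧ ∀ v : V, v ∈ chain l g n := by
    intro n
    induction n with
    | zero => exact ⟨hleg, hall⟩
    | succ n ih =>
      have hgdef : g (chain l g n)
          = Classical.choose (exists_fire G c (chain l g n) ih.1 ih.2) := by
        simp only [g, dif_pos ih]
      have hv : G.degree (g (chain l g n)) ≤ fireList G c (chain l g n) (g (chain l g n)) := by
        rw [hgdef]
        exact Classical.choose_spec (exists_fire G c (chain l g n) ih.1 ih.2)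
      constructor
      · show LegalList G c (chain l g n ++ [g (chain l g n)])
        rw [LegalList_append]
        exact ⟨ih.1, hv, trivial⟩
      · intro v
        show v ∈ chain l g n ++ [g (chain l g n)]
        exact List.mem_append_left _ (ih.2 v)
  let d : V := Classical.arbitrary V
  let f : ℕ → V := fun m => (chain l g (m + 1)).getD m d
  have hlen : ∀ n, (chain l g n).length = l.length + n := chain_length l g
  have hfA : ∀ m n, m + 1 ≤ n → (chain l g n).getD m d = f m := by
    intro m n h
    have hpre := chain_prefix l g h
    have hm : m < (chain l g (m + 1)).length := by rw [hlen]; omega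
    have hm' : m < (chain l g n).length := by rw [hlen]; omega
    rw [List.getD_eq_getElem _ _ hm']
    show _ = (chain l g (m + 1)).getD m d
    rw [List.getD_eq_getElem _ _ hm]
    exact (List.IsPrefix.getElem hpre hm).symm
  have hfB : ∀ m n, m ≤ n → (chain l g n).take m = (List.range m).map f := by
    intro m
    induction m with
    | zero => intro n _; simp
    | succ m ih =>
      intro n h
      have hm : m < (chain l g n).length := by rw [hlen]; omega
      rw [List.range_succ, List.map_append, ← ih n (by omega), List.take_succ]
      congr 1
      rw [List.getElem?_eq_getElem hm]
      have : (chain l g n)[m] = f m := by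
        rw [← hfA m n (by omega), List.getD_eq_getElem _ _ hm]
      simp [this]
  have hfC : ∀ m, fireIter G c f m = fireList G c ((List.range m).map f) := by
    intro m
    induction m with
    | zero => rfl
    | succ m ih =>
      rw [List.range_succ, List.map_append, fireList_append]
      show fire G (fireIter G c f m) (f m)
          = fireList G (fireList G c ((List.range m).map f)) [f m]
      rw [ih]
      rfl
  refine ⟨f, fun m => ?_⟩
  have hm1 : m < (chain l g (m + 1)).length := by rw [hlen]; omega
  have hleg' := (hP (m + 1)).1
  have hdec : chain l g (m + 1)
      = (chain l g (m + 1)).take m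
        ++ (chain l g (m + 1))[m] :: (chain l g (m + 1)).drop (m + 1) := by
    rw [← List.drop_eq_getElem_cons hm1, List.take_append_drop]
  rw [hdec, LegalList_append] at hleg'
  obtain ⟨-, h2, -⟩ := hleg'
  have hfm : (chain l g (m + 1))[m] = f m := by
    rw [← hfA m (m + 1) le_rfl, List.getD_eq_getElem _ _ hm1]
  rw [hfm, hfB m (m + 1) (by omega)] at h2
  rw [hfC m]
  exact h2
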